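/- Fix E ⊆ ℤ and n ∈ ℕ. The projection of any set in 𝒮_{n+1} onto its first n coordinates is a set in 𝒯_n. -/

import Mathlib

open FirstOrder

/-- The language of Presburger arithmetic: one binary function `+` and one
binary relation `<`. -/
def presburgerLang : FirstOrder.Language where
  Functions := fun n => match n with | 2 => Unit | _ => Empty
  Relations := fun n => match n with | 2 => Unit | _ => Empty

/-- The standard interpretation of the Presburger language on `ℤ`. -/
def presburgerStr : presburgerLang.Structure ℤ where
  funMap {n} f v :=
    match n, f, v with
    | 2, _, v => v 0 + v 1
  RelMap {n} r v :=
    match n, r, v with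
    | 2, _, v => v 0 < v 1

/-- A set `s ⊆ ℤ^α` is Presburger-definable: it is the realization set of a
first-order formula without parameters in the structure `(ℤ, <, +)`. -/
def PresburgerDef {α : Type*} (s : Set (α → ℤ)) : Prop :=
  letI := presburgerStr
  ∃ φ : presburgerLang.Formula α, s = {v | φ.Realize v}

/-- A function `f : ℤ^α → ℤ` is Presburger-definable iff its graph is. -/
def PresburgerFun {α : Type*} (f : (α → ℤ) → ℤ) : Prop :=
  PresburgerDef {v : α ⊕ Unit → ℤ | v (Sum.inr ()) = f (fun i => v (Sum.inl i))}

/-- `A ∈ 𝒯_n`: there are `m ∈ ℕ`, a Presburger set `X ⊆ ℤ^{m+n}`, and an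
indexed family `(P_α)_{α ∈ I}` of subsets of `E^m` with
`A = ⋃_{α ∈ I} ⋂_{u ∈ P_α} X_u`, where `X_u = {x : (u, x) ∈ X}`. -/
def InT (E : Set ℤ) (n : ℕ) (A : Set (Fin n → ℤ)) : Prop :=
  ∃ (m : ℕ) (X : Set ((Fin m ⊕ Fin n) → ℤ)) (I : Type) (P : I → Set (Fin m → ℤ)),
    PresburgerDef X ∧ (∀ α : I, ∀ u ∈ P α, ∀ i, u i ∈ E) ∧
    A = ⋃ α : I, ⋂ u ∈ P α, {x : Fin n → ℤ | Sum.elim u x ∈ X}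

/-- A weak cell in `ℤ^α × ℤ`: one of the four forms
(i) `S × {t : t ≡ k (mod N)}`;
(ii) `{(x, t) : x ∈ S, f(x) ≤ t, t ≡ k (mod N)}`;
(iii) `{(x, t) : x ∈ S, t ≤ g(x), t ≡ k (mod N)}`;
(iv) `{(x, t) : x ∈ S, f(x) ≤ t ≤ g(x), t ≡ k (mod N)}`,
with `S`, `f`, `g` Presburger and `k, N ∈ ℤ`. -/
def IsWeakCell {α : Type*} (C : Set ((α → ℤ) × ℤ)) : Prop :=
  ∃ (S : Set (α → ℤ)) (k N : ℤ), PresburgerDef S ∧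
    (C = {p | p.1 ∈ S ∧ p.2 ≡ k [ZMOD N]} ∨
     (∃ f : (α → ℤ) → ℤ, PresburgerFun f ∧
       C = {p | p.1 ∈ S ∧ f p.1 ≤ p.2 ∧ p.2 ≡ k [ZMOD N]}) ∨
     (∃ g : (α → ℤ) → ℤ, PresburgerFun g ∧
       C = {p | p.1 ∈ S ∧ p.2 ≤ g p.1 ∧ p.2 ≡ k [ZMOD N]}) ∨
     (∃ f g : (α → ℤ) → ℤ, PresburgerFun f ∧ PresburgerFun g ∧
       C = {p | p.1 ∈ S ∧ f p.1 ≤ p.2 ∧ p.2 ≤ g p.1 ∧ p.2 ≡ k [ZMOD N]}))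

/-- `A ∈ 𝒮_{n+1}`: there are `m ∈ ℕ`, a weak cell `C ⊆ ℤ^{m+n} × ℤ`, and an
indexed family `(P_α)_{α ∈ I}` of subsets of `E^m` with
`A = ⋃_{α ∈ I} ⋂_{u ∈ P_α} C_u` (identifying `ℤ^{n+1}` with `ℤ^n × ℤ`);
`𝒮_0` consists of all subsets of `ℤ^0`. -/
def InS (E : Set ℤ) : (n : ℕ) → Set (Fin n → ℤ) → Prop
  | 0, _ => True
  | (n + 1), A =>
      ∃ (m : ℕ) (C : Set (((Fin m ⊕ Fin n) → ℤ) × ℤ)) (I : Type)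
        (P : I → Set (Fin m → ℤ)),
        IsWeakCell C ∧ (∀ α : I, ∀ u ∈ P α, ∀ i, u i ∈ E) ∧
        A = ⋃ α : I, ⋂ u ∈ P α,
          {x : Fin (n + 1) → ℤ |
            (Sum.elim u (fun j : Fin n => x j.castSucc), x (Fin.last n)) ∈ C}

/-- `smulTerm c t` denotes `(c+1) • t`. -/
def smulTerm {α : Type*} : ℕ → presburgerLang.Term α → presburgerLang.Term α
  | 0, t => t
  | (c+1), t => FirstOrder.Language.Term.func (l := 2) () ![t, smulTerm c t]

theorem realize_smulTerm {α : Type*} (c : ℕ) (t : presburgerLang.Term α) (v : α → ℤ) :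
    letI := presburgerStr
    (smulTerm c t).realize v = ((c : ℤ) + 1) * t.realize v := by
  letI := presburgerStr
  induction c with
  | zero => simp [smulTerm]
  | succ c ih =>
      show (FirstOrder.Language.Term.realize v t) + (smulTerm c t).realize v = _
      rw [ih]; push_cast; ring

namespace PresburgerDef
open FirstOrder Language
variable {α β γ : Type*}

theorem inter {s t : Set (α → ℤ)} (hs : PresburgerDef s) (ht : PresburgerDef t) :
    PresburgerDef (s ∩ t) := by
  letI := presburgerStr
  obtain ⟨φ, rfl⟩ := hs; obtain ⟨ψ, rfl⟩ := ht
  exact ⟨φ ⊓ ψ, by ext v; simp⟩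

theorem union {s t : Set (α → ℤ)} (hs : PresburgerDef s) (ht : PresburgerDef t) :
    PresburgerDef (s ∪ t) := by
  letI := presburgerStr
  obtain ⟨φ, rfl⟩ := hs; obtain ⟨ψ, rfl⟩ := ht
  exact ⟨φ ⊔ ψ, by ext v; simp⟩

theorem compl {s : Set (α → ℤ)} (hs : PresburgerDef s) : PresburgerDef sᶜ := by
  letI := presburgerStr
  obtain ⟨φ, rfl⟩ := hs
  exact ⟨φ.not, by ext v; simp⟩

theorem congr_set {s t : Set (α → ℤ)} (hs : PresburgerDef s) (h : t = s) :
    PresburgerDef t := h ▸ hs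

theorem relabel {s : Set (α → ℤ)} (hs : PresburgerDef s) (ρ : α → β) :
    PresburgerDef {v : β → ℤ | (fun a => v (ρ a)) ∈ s} := by
  letI := presburgerStr
  obtain ⟨φ, rfl⟩ := hs
  exact ⟨φ.relabel ρ, by ext v; simp [Formula.realize_relabel, Function.comp_def]⟩

theorem iExs [Finite γ] {s : Set (α → ℤ)} (hs : PresburgerDef s) (f : α → β ⊕ γ) :
    PresburgerDef {w : β → ℤ | ∃ i : γ → ℤ, (fun a => Sum.elim w i (f a)) ∈ s} := by
  letI := presburgerStr
  obtain ⟨φ, rfl⟩ := hs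
  exact ⟨(φ.relabel f).iExs γ, by ext v; simp [Formula.realize_relabel, Function.comp_def]⟩

theorem iAlls [Finite γ] {s : Set (α → ℤ)} (hs : PresburgerDef s) (f : α → β ⊕ γ) :
    PresburgerDef {w : β → ℤ | ∀ i : γ → ℤ, (fun a => Sum.elim w i (f a)) ∈ s} := by
  letI := presburgerStr
  obtain ⟨φ, rfl⟩ := hs
  exact ⟨(φ.relabel f).iAlls γ, by ext v; simp [Formula.realize_relabel, Function.comp_def]⟩

theorem lt_atom (i j : α) : PresburgerDef {v : α → ℤ | v i < v j} := by
  letI := presburgerStr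
  refine ⟨Relations.formula₂ () (Term.var i) (Term.var j), ?_⟩
  ext v
  simp [Formula.realize_rel₂]
  rfl

theorem eq_atom (i j : α) : PresburgerDef {v : α → ℤ | v i = v j} := by
  letI := presburgerStr
  exact ⟨Term.equal (Term.var i) (Term.var j), by ext v; simp [Formula.realize_equal]⟩

theorem add_atom (i j l : α) : PresburgerDef {v : α → ℤ | v i + v j = v l} := by
  letI := presburgerStr
  refine ⟨Term.equal (Term.func (l := 2) () ![Term.var i, Term.var j]) (Term.var l), ?_⟩
  ext v
  simp [Formula.realize_equal, Term.realize]
  rfl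

theorem le_atom (i j : α) : PresburgerDef {v : α → ℤ | v i ≤ v j} :=
  (lt_atom j i).compl.congr_set (by ext v; simp [not_lt])

theorem smul_atom (c : ℕ) (i j l : α) :
    PresburgerDef {v : α → ℤ | v i + ((c : ℤ) + 1) * v j = v l} := by
  letI := presburgerStr
  refine ⟨Term.equal (Term.func (l := 2) () ![Term.var i, smulTerm c (Term.var j)]) (Term.var l), ?_⟩
  ext v
  rw [Set.mem_setOf_eq, Set.mem_setOf_eq, Formula.realize_equal]
  show _ ↔ (Term.var i).realize v + (smulTerm c (Term.var j)).realize v = _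
  rw [realize_smulTerm]
  simp [Term.realize]

theorem exists_aux {s : Set ((α ⊕ Unit) → ℤ)} (hs : PresburgerDef s) :
    PresburgerDef {w : α → ℤ | ∃ z : ℤ, (Sum.elim w (fun _ => z)) ∈ s} := by
  refine (hs.iExs id).congr_set ?_
  ext w
  constructor
  · rintro ⟨z, h⟩
    exact ⟨fun _ => z, h⟩
  · rintro ⟨i, h⟩
    refine ⟨i (), ?_⟩
    have : (fun _ : Unit => i ()) = i := funext fun u => by cases u; rfl
    rw [this]
    exact h

theorem forall_aux {s : Set ((α ⊕ Unit) → ℤ)} (hs : PresburgerDef s) :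
    PresburgerDef {w : α → ℤ | ∀ z : ℤ, (Sum.elim w (fun _ => z)) ∈ s} := by
  refine (hs.iAlls id).congr_set ?_
  ext w
  constructor
  · rintro h i
    have : (fun _ : Unit => i ()) = i := funext fun u => by cases u; rfl
    have h2 := h (i ())
    rw [this] at h2
    exact h2
  · rintro h z
    exact h (fun _ => z)

theorem zero_const : PresburgerDef {v : Unit → ℤ | v () = 0} :=
  (add_atom (α := Unit) () () ()).congr_set (by ext v; simp)

theorem pos_atom (i : α) : PresburgerDef {v : α → ℤ | 0 < v i} := by
  have base : PresburgerDef {V : α ⊕ Unit → ℤ | V (Sum.inr ()) + V (Sum.inr ()) = V (Sum.inr ())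
      ∧ V (Sum.inr ()) < V (Sum.inl i)} :=
    (add_atom _ _ _).inter (lt_atom _ _)
  refine base.exists_aux.congr_set ?_
  ext v
  constructor
  · intro h
    refine ⟨0, ?_, ?_⟩
    · simp
    · simpa using h
  · rintro ⟨z, h1, h2⟩
    simp only [Set.mem_setOf_eq, Sum.elim_inl, Sum.elim_inr] at h1 h2 ⊢
    omega

theorem one_const : PresburgerDef {v : Unit → ℤ | v () = 1} := by
  have hall : PresburgerDef {v : Unit → ℤ | ∀ z : ℤ, ¬ (0 < z) ∨ ¬ (z < v ())} := by
    have base : PresburgerDef {V : Unit ⊕ Unit → ℤ |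
        ¬ (0 < V (Sum.inr ())) ∨ ¬ (V (Sum.inr ()) < V (Sum.inl ()))} :=
      (pos_atom (Sum.inr ())).compl.union (lt_atom (Sum.inr ()) (Sum.inl ())).compl
    exact base.forall_aux.congr_set (by ext v; rfl)
  refine ((pos_atom (α := Unit) ()).inter hall).congr_set ?_
  ext v
  simp only [Set.mem_setOf_eq, Set.mem_inter_iff]
  constructor
  · intro h
    constructor
    · omega
    · intro z
      rcases lt_or_ge 0 z with hz | hz
      · right; omega
      · left; omega
  · rintro ⟨h1, h2⟩
    have := h2 (v () - 1)
    omega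

theorem natConst : (c : ℕ) → PresburgerDef {v : Unit → ℤ | v () = (c : ℤ)}
  | 0 => zero_const.congr_set (by norm_num)
  | 1 => one_const.congr_set (by norm_num)
  | (c+2) => by
    have base : PresburgerDef {V : Unit ⊕ Bool → ℤ |
        V (Sum.inr true) = ((c+1 : ℕ) : ℤ) ∧ (V (Sum.inr false) = 1 ∧
        V (Sum.inr true) + V (Sum.inr false) = V (Sum.inl ()))} := by
      refine (((natConst (c+1)).relabel (fun _ => Sum.inr true)).inter
        ((one_const.relabel (fun _ => Sum.inr false)).inter (add_atom _ _ _)))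
    have h2 := base.iExs id
    refine h2.congr_set ?_
    ext v
    constructor
    · intro h
      refine ⟨fun b => bif b then ((c+1:ℕ):ℤ) else 1, ?_, ?_, ?_⟩ <;>
        simp_all <;> push_cast <;> omega
    · rintro ⟨i, h1, h2, h3⟩
      simp_all
      push_cast
      omega

theorem intConst (c : ℤ) : PresburgerDef {v : Unit → ℤ | v () = c} := by
  rcases le_or_gt 0 c with hc | hc
  · exact (natConst c.toNat).congr_set (by ext v; simp; omega)
  · have base : PresburgerDef {V : Unit ⊕ Bool → ℤ |
        V (Sum.inr true) = ((-c).toNat : ℤ) ∧ (V (Sum.inr false) = 0 ∧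
        V (Sum.inl ()) + V (Sum.inr true) = V (Sum.inr false))} :=
      ((natConst (-c).toNat).relabel (fun _ => Sum.inr true)).inter
        ((zero_const.relabel (fun _ => Sum.inr false)).inter (add_atom _ _ _))
    refine (base.iExs id).congr_set ?_
    ext v
    constructor
    · intro h
      refine ⟨fun b => bif b then ((-c).toNat : ℤ) else 0, ?_, ?_, ?_⟩ <;>
        simp_all <;> omega
    · rintro ⟨i, h1, h2, h3⟩
      simp_all
      omega

theorem eq_const (i : α) (c : ℤ) : PresburgerDef {v : α → ℤ | v i = c} := by
  have base : PresburgerDef {V : α ⊕ Unit → ℤ |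
      V (Sum.inr ()) = c ∧ V (Sum.inl i) = V (Sum.inr ())} :=
    ((intConst c).relabel (fun _ => Sum.inr ())).inter (eq_atom _ _)
  refine base.exists_aux.congr_set ?_
  ext v
  constructor
  · intro h
    refine ⟨c, ?_, ?_⟩
    · rfl
    · simpa using h
  · rintro ⟨z, h1, h2⟩
    simp only [Set.mem_setOf_eq, Sum.elim_inl, Sum.elim_inr] at h1 h2 ⊢
    omega

theorem cong_atom (i : α) (k N : ℤ) : PresburgerDef {v : α → ℤ | v i ≡ k [ZMOD N]} := by
  rcases hN : N.natAbs with _ | M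
  · refine (eq_const i k).congr_set ?_
    ext v
    have hN0 : N = 0 := by omega
    subst hN0
    simp only [Set.mem_setOf_eq, Int.ModEq]
    omega
  · -- v i ≡ k [ZMOD N] ↔ ∃ s, v i + (M+1) * s = k
    have base : PresburgerDef {V : α ⊕ Bool → ℤ |
        V (Sum.inr false) = k ∧
        V (Sum.inl i) + ((M : ℤ) + 1) * V (Sum.inr true) = V (Sum.inr false)} :=
      ((intConst k).relabel (fun _ => Sum.inr false)).inter (smul_atom M _ _ _)
    refine (base.iExs id).congr_set ?_
    ext v
    simp only [Set.mem_setOf_eq, id_eq, Sum.elim_inl, Sum.elim_inr]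
    rw [Int.modEq_iff_dvd, ← Int.natAbs_dvd, hN]
    constructor
    · intro hdvd
      obtain ⟨s, hs⟩ := hdvd
      refine ⟨fun b => bif b then s else k, by simp, ?_⟩
      simp only [Bool.cond_true, Bool.cond_false]
      push_cast at hs
      linarith
    · rintro ⟨j, h1, h2⟩
      refine ⟨j true, ?_⟩
      push_cast
      linarith

end PresburgerDef

namespace PresburgerFun
open PresburgerDef

theorem graph_pull {L α : Type*} {f : (L → ℤ) → ℤ} (hf : PresburgerFun f)
    (ρ : L → α) (j : α) : PresburgerDef {v : α → ℤ | v j = f (fun i => v (ρ i))} := by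
  refine (PresburgerDef.relabel hf (Sum.elim ρ (fun _ => j))).congr_set ?_
  ext v
  simp only [Set.mem_setOf_eq, Sum.elim_inl, Sum.elim_inr]

theorem fun_le_var {L α : Type*} {f : (L → ℤ) → ℤ} (hf : PresburgerFun f)
    (ρ : L → α) (j : α) : PresburgerDef {v : α → ℤ | f (fun i => v (ρ i)) ≤ v j} := by
  have base : PresburgerDef {V : α ⊕ Unit → ℤ |
      V (Sum.inr ()) = f (fun i => V (Sum.inl (ρ i))) ∧ V (Sum.inr ()) ≤ V (Sum.inl j)} :=
    (hf.graph_pull (fun i => Sum.inl (ρ i)) (Sum.inr ())).inter (PresburgerDef.le_atom _ _)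
  refine base.exists_aux.congr_set ?_
  ext v; constructor
  · intro h
    exact ⟨f (fun i => v (ρ i)), rfl, h⟩
  · rintro ⟨y, h1, h2⟩
    simp only [Set.mem_setOf_eq, Sum.elim_inl, Sum.elim_inr] at h1 h2 ⊢
    exact h1 ▸ h2

theorem var_le_fun {L α : Type*} {f : (L → ℤ) → ℤ} (hf : PresburgerFun f)
    (ρ : L → α) (j : α) : PresburgerDef {v : α → ℤ | v j ≤ f (fun i => v (ρ i))} := by
  have base : PresburgerDef {V : α ⊕ Unit → ℤ |
      V (Sum.inr ()) = f (fun i => V (Sum.inl (ρ i))) ∧ V (Sum.inl j) ≤ V (Sum.inr ())} :=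
    (hf.graph_pull (fun i => Sum.inl (ρ i)) (Sum.inr ())).inter (PresburgerDef.le_atom _ _)
  refine base.exists_aux.congr_set ?_
  ext v; constructor
  · intro h
    exact ⟨f (fun i => v (ρ i)), rfl, h⟩
  · rintro ⟨y, h1, h2⟩
    simp only [Set.mem_setOf_eq, Sum.elim_inl, Sum.elim_inr] at h1 h2 ⊢
    exact h1 ▸ h2

theorem fun_le_fun {L₁ L₂ α : Type*} {f : (L₁ → ℤ) → ℤ} {g : (L₂ → ℤ) → ℤ}
    (hf : PresburgerFun f) (hg : PresburgerFun g) (ρ₁ : L₁ → α) (ρ₂ : L₂ → α) :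
    PresburgerDef {v : α → ℤ | f (fun i => v (ρ₁ i)) ≤ g (fun i => v (ρ₂ i))} := by
  have base : PresburgerDef {V : α ⊕ Bool → ℤ |
      V (Sum.inr true) = f (fun i => V (Sum.inl (ρ₁ i))) ∧
      (V (Sum.inr false) = g (fun i => V (Sum.inl (ρ₂ i))) ∧
       V (Sum.inr true) ≤ V (Sum.inr false))} :=
    (hf.graph_pull (fun i => Sum.inl (ρ₁ i)) (Sum.inr true)).inter
      ((hg.graph_pull (fun i => Sum.inl (ρ₂ i)) (Sum.inr false)).inter
        (PresburgerDef.le_atom _ _))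
  refine (base.iExs id).congr_set ?_
  ext v; constructor
  · intro h
    exact ⟨fun b => bif b then f (fun i => v (ρ₁ i)) else g (fun i => v (ρ₂ i)), rfl, rfl, h⟩
  · rintro ⟨w, h1, h2, h3⟩
    simp only [Set.mem_setOf_eq, id_eq, Sum.elim_inl, Sum.elim_inr] at h1 h2 h3 ⊢
    rw [← h1, ← h2]
    exact h3

end PresburgerFun

/-- Concatenation of two parameter tuples. -/
def pjoin {m : ℕ} (u₀ u : Fin m → ℤ) : Fin (m + m) → ℤ :=
  fun i => Sum.elim u₀ u (finSumFinEquiv.symm i)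

/-- Reindexing onto the first parameter block. -/
def pmap₀ {m n : ℕ} : (Fin m ⊕ Fin n) → (Fin (m + m) ⊕ Fin n) :=
  Sum.map (fun i => finSumFinEquiv (Sum.inl i)) id

/-- Reindexing onto the second parameter block. -/
def pmap₁ {m n : ℕ} : (Fin m ⊕ Fin n) → (Fin (m + m) ⊕ Fin n) :=
  Sum.map (fun i => finSumFinEquiv (Sum.inr i)) id

theorem pjoin_elim₀ {m n : ℕ} (u₀ u : Fin m → ℤ) (x : Fin n → ℤ) :
    (fun a => Sum.elim (pjoin u₀ u) x (pmap₀ a)) = Sum.elim u₀ x := by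
  funext a
  cases a with
  | inl i =>
      show pjoin u₀ u (finSumFinEquiv (Sum.inl i)) = u₀ i
      unfold pjoin
      rw [Equiv.symm_apply_apply]
      rfl
  | inr j => rfl

theorem pjoin_elim₁ {m n : ℕ} (u₀ u : Fin m → ℤ) (x : Fin n → ℤ) :
    (fun a => Sum.elim (pjoin u₀ u) x (pmap₁ a)) = Sum.elim u x := by
  funext a
  cases a with
  | inl i =>
      show pjoin u₀ u (finSumFinEquiv (Sum.inr i)) = u i
      unfold pjoin
      rw [Equiv.symm_apply_apply]
      rfl
  | inr j => rfl

theorem pjoin_mem_E {m : ℕ} {E : Set ℤ} {u₀ u : Fin m → ℤ}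
    (h₀ : ∀ i, u₀ i ∈ E) (h : ∀ i, u i ∈ E) : ∀ i, pjoin u₀ u i ∈ E := by
  intro i
  unfold pjoin
  rcases hj : finSumFinEquiv.symm i with j | j
  · exact h₀ j
  · exact h j

section CellSets
open PresburgerDef PresburgerFun

theorem exists_cong_ge_def {L τ : Type*} {f : (L → ℤ) → ℤ} (hf : PresburgerFun f)
    (ρ : L → τ) (k N : ℤ) :
    PresburgerDef {v : τ → ℤ | ∃ s : ℤ, s ≡ k [ZMOD N] ∧ f (fun i => v (ρ i)) ≤ s} := by
  have base : PresburgerDef {V : τ ⊕ Unit → ℤ |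
      V (Sum.inr ()) ≡ k [ZMOD N] ∧ f (fun i => V (Sum.inl (ρ i))) ≤ V (Sum.inr ())} :=
    (PresburgerDef.cong_atom (Sum.inr ()) k N).inter
      (hf.fun_le_var (fun i => Sum.inl (ρ i)) (Sum.inr ()))
  exact base.exists_aux.congr_set rfl

theorem exists_cong_le_def {L τ : Type*} {g : (L → ℤ) → ℤ} (hg : PresburgerFun g)
    (ρ : L → τ) (k N : ℤ) :
    PresburgerDef {v : τ → ℤ | ∃ s : ℤ, s ≡ k [ZMOD N] ∧ s ≤ g (fun i => v (ρ i))} := by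
  have base : PresburgerDef {V : τ ⊕ Unit → ℤ |
      V (Sum.inr ()) ≡ k [ZMOD N] ∧ V (Sum.inr ()) ≤ g (fun i => V (Sum.inl (ρ i)))} :=
    (PresburgerDef.cong_atom (Sum.inr ()) k N).inter
      (hg.var_le_fun (fun i => Sum.inl (ρ i)) (Sum.inr ()))
  exact base.exists_aux.congr_set rfl

theorem exists_cong_least_def {L τ : Type*} {f g : (L → ℤ) → ℤ}
    (hf : PresburgerFun f) (hg : PresburgerFun g) (ρ₀ ρ₁ : L → τ) (k N : ℤ) :
    PresburgerDef {v : τ → ℤ | ∃ s : ℤ, s ≡ k [ZMOD N] ∧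
      (f (fun i => v (ρ₀ i)) ≤ s ∧
      ((∀ s' : ℤ, (s' ≡ k [ZMOD N] ∧ f (fun i => v (ρ₀ i)) ≤ s') → s ≤ s') ∧
      s ≤ g (fun i => v (ρ₁ i))))} := by
  have least : PresburgerDef {V : τ ⊕ Unit → ℤ |
      ∀ s' : ℤ, (s' ≡ k [ZMOD N] ∧ f (fun i => V (Sum.inl (ρ₀ i))) ≤ s') →
        V (Sum.inr ()) ≤ s'} := by
    have inner : PresburgerDef ({W : (τ ⊕ Unit) ⊕ Unit → ℤ |
        W (Sum.inr ()) ≡ k [ZMOD N] ∧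
          f (fun i => W (Sum.inl (Sum.inl (ρ₀ i)))) ≤ W (Sum.inr ())}ᶜ ∪
        {W : (τ ⊕ Unit) ⊕ Unit → ℤ | W (Sum.inl (Sum.inr ())) ≤ W (Sum.inr ())}) :=
      ((PresburgerDef.cong_atom (Sum.inr ()) k N).inter
        (hf.fun_le_var (fun i => Sum.inl (Sum.inl (ρ₀ i))) (Sum.inr ()))).compl.union
        (PresburgerDef.le_atom (Sum.inl (Sum.inr ())) (Sum.inr ()))
    refine inner.forall_aux.congr_set ?_
    ext V
    constructor
    · intro h z
      by_cases hz : z ≡ k [ZMOD N] ∧ f (fun i => V (Sum.inl (ρ₀ i))) ≤ z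
      · exact Or.inr (h z hz)
      · exact Or.inl hz
    · intro h z hz
      rcases h z with h' | h'
      · exact absurd hz h'
      · exact h'
  have base : PresburgerDef {V : τ ⊕ Unit → ℤ |
      V (Sum.inr ()) ≡ k [ZMOD N] ∧
      (f (fun i => V (Sum.inl (ρ₀ i))) ≤ V (Sum.inr ()) ∧
      ((∀ s' : ℤ, (s' ≡ k [ZMOD N] ∧ f (fun i => V (Sum.inl (ρ₀ i))) ≤ s') →
          V (Sum.inr ()) ≤ s') ∧
       V (Sum.inr ()) ≤ g (fun i => V (Sum.inl (ρ₁ i)))))} :=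
    (PresburgerDef.cong_atom (Sum.inr ()) k N).inter
      ((hf.fun_le_var (fun i => Sum.inl (ρ₀ i)) (Sum.inr ())).inter
        (least.inter (hg.var_le_fun (fun i => Sum.inl (ρ₁ i)) (Sum.inr ()))))
  exact base.exists_aux.congr_set rfl

end CellSets

/-- The projection of a set in `𝒮_{n+1}` onto its first `n` coordinates is a
set in `𝒯_n`. -/
theorem proj_InS_mem_InT (E : Set ℤ) (n : ℕ)
    (A : Set (Fin (n + 1) → ℤ)) (hA : InS E (n + 1) A) :
    InT E n {x : Fin n → ℤ | ∃ t : ℤ, Fin.snoc x t ∈ A} := by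
  classical
  obtain ⟨m, C, I, P, hC, hPE, hAeq⟩ := hA
  have hmem : ∀ x : Fin n → ℤ, (∃ t : ℤ, Fin.snoc x t ∈ A) ↔
      ∃ (α : I) (t : ℤ), ∀ u ∈ P α, (Sum.elim u x, t) ∈ C := by
    intro x
    rw [hAeq]
    simp only [Set.mem_iUnion, Set.mem_iInter, Set.mem_setOf_eq, Fin.snoc_castSucc,
      Fin.snoc_last]
    exact ⟨fun ⟨t, α, h⟩ => ⟨α, t, h⟩, fun ⟨α, t, h⟩ => ⟨t, α, h⟩⟩
  obtain ⟨S, k, N, hS, hform⟩ := hC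
  rcases hform with h | ⟨f, hf, h⟩ | ⟨g, hg, h⟩ | ⟨f, g, hf, hg, h⟩
  -- Case (i): congruence only
  · subst h
    refine ⟨m, S, I, P, hS, hPE, ?_⟩
    ext x
    simp only [Set.mem_iUnion, Set.mem_iInter, Set.mem_setOf_eq]
    rw [hmem x]
    constructor
    · rintro ⟨α, t, ht⟩
      exact ⟨α, fun u hu => (ht u hu).1⟩
    · rintro ⟨α, hx⟩
      exact ⟨α, k, fun u hu => ⟨hx u hu, Int.ModEq.refl k⟩⟩
  -- Case (ii): lower bound
  · subst h
    refine ⟨m + m,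
      {v : Fin (m + m) ⊕ Fin n → ℤ |
        (fun a => v (pmap₁ a)) ∈ S ∧ ((fun a => v (pmap₀ a)) ∈ S ∧
        (f (fun i => v (pmap₁ i)) ≤ f (fun i => v (pmap₀ i)) ∧
        ∃ s : ℤ, s ≡ k [ZMOD N] ∧ f (fun i => v (pmap₀ i)) ≤ s))},
      (Σ α : I, {u₀ : Fin m → ℤ // u₀ ∈ P α}) ⊕ {α : I // P α = ∅},
      Sum.elim (fun p => (fun u => pjoin p.2.1 u) '' (P p.1)) (fun _ => ∅),
      ?_, ?_, ?_⟩
    · exact (hS.relabel pmap₁).inter ((hS.relabel pmap₀).inter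
        ((hf.fun_le_fun hf pmap₁ pmap₀).inter (exists_cong_ge_def hf pmap₀ k N)))
    · rintro (⟨α, u₀, hu₀⟩ | ⟨α, hα⟩) w hw i
      · obtain ⟨u, hu, rfl⟩ := hw
        exact pjoin_mem_E (hPE α u₀ hu₀) (hPE α u hu) i
      · exact absurd hw (Set.notMem_empty w)
    · ext x
      simp only [Set.mem_iUnion, Set.mem_iInter, Set.mem_setOf_eq]
      rw [hmem x]
      constructor
      · rintro ⟨α, t, ht⟩
        rcases Set.eq_empty_or_nonempty (P α) with hP | ⟨u₁, hu₁⟩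
        · exact ⟨Sum.inr ⟨α, hP⟩, fun w hw => absurd hw (Set.notMem_empty w)⟩
        · obtain ⟨a, ham, hmax⟩ := Int.exists_greatest_of_bdd
            (P := fun y => ∃ u ∈ P α, y = f (Sum.elim u x))
            ⟨t, by rintro z ⟨u, hu, rfl⟩; exact (ht u hu).2.1⟩
            ⟨f (Sum.elim u₁ x), u₁, hu₁, rfl⟩
          obtain ⟨u₀, hu₀, rfl⟩ := ham
          refine ⟨Sum.inl ⟨α, u₀, hu₀⟩, ?_⟩
          rintro w ⟨u, hu, rfl⟩
          refine ⟨?_, ?_, ?_, t, (ht u₀ hu₀).2.2, ?_⟩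
          · rw [pjoin_elim₁]
            exact (ht u hu).1
          · rw [pjoin_elim₀]
            exact (ht u₀ hu₀).1
          · rw [pjoin_elim₁, pjoin_elim₀]
            exact hmax _ ⟨u, hu, rfl⟩
          · rw [pjoin_elim₀]
            exact (ht u₀ hu₀).2.1
      · rintro ⟨β | β, hβ⟩
        · obtain ⟨α, u₀, hu₀⟩ := β
          obtain ⟨-, -, -, s, hsk, hs⟩ := hβ (pjoin u₀ u₀) ⟨u₀, hu₀, rfl⟩
          rw [pjoin_elim₀] at hs
          refine ⟨α, s, ?_⟩
          intro u hu
          obtain ⟨hS1, -, hle, -⟩ := hβ (pjoin u₀ u) ⟨u, hu, rfl⟩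
          rw [pjoin_elim₁] at hS1
          rw [pjoin_elim₁, pjoin_elim₀] at hle
          exact ⟨hS1, hle.trans hs, hsk⟩
        · obtain ⟨α, hα⟩ := β
          refine ⟨α, 0, fun u hu => ?_⟩
          rw [hα] at hu
          exact absurd hu (Set.notMem_empty u)
  -- Case (iii): upper bound
  · subst h
    refine ⟨m + m,
      {v : Fin (m + m) ⊕ Fin n → ℤ |
        (fun a => v (pmap₁ a)) ∈ S ∧ ((fun a => v (pmap₀ a)) ∈ S ∧
        (g (fun i => v (pmap₀ i)) ≤ g (fun i => v (pmap₁ i)) ∧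
        ∃ s : ℤ, s ≡ k [ZMOD N] ∧ s ≤ g (fun i => v (pmap₀ i))))},
      (Σ α : I, {u₀ : Fin m → ℤ // u₀ ∈ P α}) ⊕ {α : I // P α = ∅},
      Sum.elim (fun p => (fun u => pjoin p.2.1 u) '' (P p.1)) (fun _ => ∅),
      ?_, ?_, ?_⟩
    · exact (hS.relabel pmap₁).inter ((hS.relabel pmap₀).inter
        ((hg.fun_le_fun hg pmap₀ pmap₁).inter (exists_cong_le_def hg pmap₀ k N)))
    · rintro (⟨α, u₀, hu₀⟩ | ⟨α, hα⟩) w hw i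
      · obtain ⟨u, hu, rfl⟩ := hw
        exact pjoin_mem_E (hPE α u₀ hu₀) (hPE α u hu) i
      · exact absurd hw (Set.notMem_empty w)
    · ext x
      simp only [Set.mem_iUnion, Set.mem_iInter, Set.mem_setOf_eq]
      rw [hmem x]
      constructor
      · rintro ⟨α, t, ht⟩
        rcases Set.eq_empty_or_nonempty (P α) with hP | ⟨u₁, hu₁⟩
        · exact ⟨Sum.inr ⟨α, hP⟩, fun w hw => absurd hw (Set.notMem_empty w)⟩
        · obtain ⟨a, ham, hmin⟩ := Int.exists_least_of_bdd
            (P := fun y => ∃ u ∈ P α, y = g (Sum.elim u x))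
            ⟨t, by rintro z ⟨u, hu, rfl⟩; exact (ht u hu).2.1⟩
            ⟨g (Sum.elim u₁ x), u₁, hu₁, rfl⟩
          obtain ⟨u₀, hu₀, rfl⟩ := ham
          refine ⟨Sum.inl ⟨α, u₀, hu₀⟩, ?_⟩
          rintro w ⟨u, hu, rfl⟩
          refine ⟨?_, ?_, ?_, t, (ht u₀ hu₀).2.2, ?_⟩
          · rw [pjoin_elim₁]
            exact (ht u hu).1
          · rw [pjoin_elim₀]
            exact (ht u₀ hu₀).1
          · rw [pjoin_elim₁, pjoin_elim₀]
            exact hmin _ ⟨u, hu, rfl⟩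
          · rw [pjoin_elim₀]
            exact (ht u₀ hu₀).2.1
      · rintro ⟨β | β, hβ⟩
        · obtain ⟨α, u₀, hu₀⟩ := β
          obtain ⟨-, -, -, s, hsk, hs⟩ := hβ (pjoin u₀ u₀) ⟨u₀, hu₀, rfl⟩
          rw [pjoin_elim₀] at hs
          refine ⟨α, s, ?_⟩
          intro u hu
          obtain ⟨hS1, -, hge, -⟩ := hβ (pjoin u₀ u) ⟨u, hu, rfl⟩
          rw [pjoin_elim₁] at hS1
          rw [pjoin_elim₁, pjoin_elim₀] at hge
          exact ⟨hS1, hs.trans hge, hsk⟩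
        · obtain ⟨α, hα⟩ := β
          refine ⟨α, 0, fun u hu => ?_⟩
          rw [hα] at hu
          exact absurd hu (Set.notMem_empty u)
  -- Case (iv): two-sided
  · subst h
    refine ⟨m + m,
      {v : Fin (m + m) ⊕ Fin n → ℤ |
        (fun a => v (pmap₁ a)) ∈ S ∧ ((fun a => v (pmap₀ a)) ∈ S ∧
        (f (fun i => v (pmap₁ i)) ≤ f (fun i => v (pmap₀ i)) ∧
        ∃ s : ℤ, s ≡ k [ZMOD N] ∧
          (f (fun i => v (pmap₀ i)) ≤ s ∧
          ((∀ s' : ℤ, (s' ≡ k [ZMOD N] ∧ f (fun i => v (pmap₀ i)) ≤ s') → s ≤ s') ∧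
          s ≤ g (fun i => v (pmap₁ i))))))},
      (Σ α : I, {u₀ : Fin m → ℤ // u₀ ∈ P α}) ⊕ {α : I // P α = ∅},
      Sum.elim (fun p => (fun u => pjoin p.2.1 u) '' (P p.1)) (fun _ => ∅),
      ?_, ?_, ?_⟩
    · exact (hS.relabel pmap₁).inter ((hS.relabel pmap₀).inter
        ((hf.fun_le_fun hf pmap₁ pmap₀).inter
          (exists_cong_least_def hf hg pmap₀ pmap₁ k N)))
    · rintro (⟨α, u₀, hu₀⟩ | ⟨α, hα⟩) w hw i
      · obtain ⟨u, hu, rfl⟩ := hw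
        exact pjoin_mem_E (hPE α u₀ hu₀) (hPE α u hu) i
      · exact absurd hw (Set.notMem_empty w)
    · ext x
      simp only [Set.mem_iUnion, Set.mem_iInter, Set.mem_setOf_eq]
      rw [hmem x]
      constructor
      · rintro ⟨α, t, ht⟩
        rcases Set.eq_empty_or_nonempty (P α) with hP | ⟨u₁, hu₁⟩
        · exact ⟨Sum.inr ⟨α, hP⟩, fun w hw => absurd hw (Set.notMem_empty w)⟩
        · obtain ⟨a, ham, hmax⟩ := Int.exists_greatest_of_bdd
            (P := fun y => ∃ u ∈ P α, y = f (Sum.elim u x))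
            ⟨t, by rintro z ⟨u, hu, rfl⟩; exact (ht u hu).2.1⟩
            ⟨f (Sum.elim u₁ x), u₁, hu₁, rfl⟩
          obtain ⟨u₀, hu₀, rfl⟩ := ham
          obtain ⟨s, hsmem, hsle⟩ := Int.exists_least_of_bdd
            (P := fun z => z ≡ k [ZMOD N] ∧ f (Sum.elim u₀ x) ≤ z)
            ⟨f (Sum.elim u₀ x), fun z hz => hz.2⟩
            ⟨t, (ht u₀ hu₀).2.2.2, (ht u₀ hu₀).2.1⟩
          refine ⟨Sum.inl ⟨α, u₀, hu₀⟩, ?_⟩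
          rintro w ⟨u, hu, rfl⟩
          refine ⟨?_, ?_, ?_, s, hsmem.1, ?_, ?_, ?_⟩
          · rw [pjoin_elim₁]
            exact (ht u hu).1
          · rw [pjoin_elim₀]
            exact (ht u₀ hu₀).1
          · rw [pjoin_elim₁, pjoin_elim₀]
            exact hmax _ ⟨u, hu, rfl⟩
          · rw [pjoin_elim₀]
            exact hsmem.2
          · rw [pjoin_elim₀]
            exact hsle
          · rw [pjoin_elim₁]
            exact (hsle t ⟨(ht u₀ hu₀).2.2.2, (ht u₀ hu₀).2.1⟩).trans (ht u hu).2.2.1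
      · rintro ⟨β | β, hβ⟩
        · obtain ⟨α, u₀, hu₀⟩ := β
          obtain ⟨-, -, -, s, hsk, hf0, hleast, -⟩ := hβ (pjoin u₀ u₀) ⟨u₀, hu₀, rfl⟩
          rw [pjoin_elim₀] at hf0 hleast
          refine ⟨α, s, ?_⟩
          intro u hu
          obtain ⟨hS1, -, hle, s', hs'k, hf0', hleast', hsg'⟩ :=
            hβ (pjoin u₀ u) ⟨u, hu, rfl⟩
          rw [pjoin_elim₁] at hS1 hsg'
          rw [pjoin_elim₁, pjoin_elim₀] at hle
          rw [pjoin_elim₀] at hf0' hleast'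
          have hss' : s = s' :=
            le_antisymm (hleast s' ⟨hs'k, hf0'⟩) (hleast' s ⟨hsk, hf0⟩)
          exact ⟨hS1, hle.trans hf0, hss' ▸ hsg', hsk⟩
        · obtain ⟨α, hα⟩ := β
          refine ⟨α, 0, fun u hu => ?_⟩
          rw [hα] at hu
          exact absurd hu (Set.notMem_empty u)
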